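/- Let f : ℝ → ℝ be differentiable everywhere with continuous derivative, let a < b be real numbers, and suppose f is convex on the closed interval [a, b]. If (f(b) − f(a))/(b − a) = deriv f a or (f(b) − f(a))/(b − a) = deriv f b, then deriv f a = deriv f b. -/
import Mathlib

open Set Filter Topology

lemma deriv_eq_of_affine_on {f : ℝ → ℝ} (hf : Differentiable ℝ f) {a b c S : ℝ} (hab : a < b)
    (heq : ∀ x ∈ Icc a b, f x = c + S * x) {x : ℝ} (hx : x ∈ Icc a b) : deriv f x = S := by
  have hg : HasDerivWithinAt (fun y => c + S * y) S (Icc a b) x := by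
    simpa using (((hasDerivAt_id x).const_mul S).const_add c).hasDerivWithinAt
  have hgf : HasDerivWithinAt f S (Icc a b) x :=
    hg.congr (fun y hy => heq y hy) (heq x hx)
  rw [← (hf x).derivWithin (uniqueDiffOn_Icc hab x hx),
    hgf.derivWithin (uniqueDiffOn_Icc hab x hx)]

lemma deriv_left_le_slope {f : ℝ → ℝ} (hf : Differentiable ℝ f) {a b : ℝ}
    (h : ConvexOn ℝ (Set.Icc a b) f) {x : ℝ} (hx : x ∈ Set.Ioc a b) :
    deriv f a ≤ (f x - f a) / (x - a) := by
  have htend : Tendsto (slope f a) (𝓝[>] a) (𝓝 (deriv f a)) :=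
    (hasDerivAt_iff_tendsto_slope.mp (hf a).hasDerivAt).mono_left
      (nhdsWithin_mono a fun y hy => ne_of_gt hy)
  refine le_of_tendsto htend ?_
  filter_upwards [Ioo_mem_nhdsGT_of_mem ⟨le_refl a, hx.1⟩] with t ht
  rw [slope_def_field]
  exact h.secant_mono (left_mem_Icc.mpr (hx.1.le.trans hx.2))
    ⟨ht.1.le, ht.2.le.trans hx.2⟩ ⟨hx.1.le, hx.2⟩ (ne_of_gt ht.1) (ne_of_gt hx.1) ht.2.le

lemma slope_le_deriv_right {f : ℝ → ℝ} (hf : Differentiable ℝ f) {a b : ℝ}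
    (h : ConvexOn ℝ (Set.Icc a b) f) {x : ℝ} (hx : x ∈ Set.Ico a b) :
    (f x - f b) / (x - b) ≤ deriv f b := by
  have htend : Tendsto (slope f b) (𝓝[<] b) (𝓝 (deriv f b)) :=
    (hasDerivAt_iff_tendsto_slope.mp (hf b).hasDerivAt).mono_left
      (nhdsWithin_mono b fun y hy => ne_of_lt hy)
  refine ge_of_tendsto htend ?_
  filter_upwards [Ioo_mem_nhdsLT_of_mem ⟨hx.2, le_refl b⟩] with t ht
  rw [slope_def_field]
  exact h.secant_mono (right_mem_Icc.mpr (hx.1.trans hx.2.le))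
    ⟨hx.1, hx.2.le⟩ ⟨hx.1.trans ht.1.le, ht.2.le⟩ (ne_of_lt hx.2) (ne_of_lt ht.2) ht.1.le

theorem stmt_13 (f : ℝ → ℝ) (hf : Differentiable ℝ f) (hf' : Continuous (deriv f))
    (a b : ℝ) (hab : a < b) (h : ConvexOn ℝ (Set.Icc a b) f)
    (hc : (f b - f a) / (b - a) = deriv f a ∨ (f b - f a) / (b - a) = deriv f b) :
    deriv f a = deriv f b := by
  set S := (f b - f a) / (b - a) with hS
  rcases hc with hca | hcb
  · -- S = deriv f a : show f is affine with slope S on Icc a b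
    have heq : ∀ x ∈ Icc a b, f x = (f a - S * a) + S * x := by
      intro x hx
      rcases eq_or_lt_of_le hx.1 with rfl | hax
      · ring
      · have h1 : (f x - f a) / (x - a) ≤ S := by
          rcases eq_or_lt_of_le hx.2 with rfl | hxb
          · exact le_of_eq rfl
          · exact h.secant_mono (left_mem_Icc.mpr hab.le) hx
              (right_mem_Icc.mpr hab.le) (ne_of_gt hax) (ne_of_gt hab) hx.2
        have h2 : S ≤ (f x - f a) / (x - a) := hca ▸ deriv_left_le_slope hf h ⟨hax, hx.2⟩
        have h3 : (f x - f a) / (x - a) = S := le_antisymm h1 h2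
        have hxa : x - a ≠ 0 := sub_ne_zero.mpr (ne_of_gt hax)
        field_simp at h3
        linarith [h3]
    rw [deriv_eq_of_affine_on hf hab heq (left_mem_Icc.mpr hab.le),
      deriv_eq_of_affine_on hf hab heq (right_mem_Icc.mpr hab.le)]
  · have heq : ∀ x ∈ Icc a b, f x = (f b - S * b) + S * x := by
      intro x hx
      rcases eq_or_lt_of_le hx.2 with rfl | hxb
      · ring
      · have hflip : S = (f a - f b) / (a - b) := by
          rw [hS, ← neg_div_neg_eq]; ring_nf
        have h1 : S ≤ (f x - f b) / (x - b) := by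
          rcases eq_or_lt_of_le hx.1 with rfl | hax
          · exact le_of_eq hflip
          · exact hflip ▸ h.secant_mono (right_mem_Icc.mpr hab.le) (left_mem_Icc.mpr hab.le) hx
              (ne_of_lt hab) (ne_of_lt hxb) hx.1
        have h2 : (f x - f b) / (x - b) ≤ S := hcb ▸ slope_le_deriv_right hf h ⟨hx.1, hxb⟩
        have h3 : (f x - f b) / (x - b) = S := le_antisymm h2 h1
        have hxb' : x - b ≠ 0 := sub_ne_zero.mpr (ne_of_lt hxb)
        field_simp at h3
        linarith [h3]
    rw [deriv_eq_of_affine_on hf hab heq (left_mem_Icc.mpr hab.le),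
      deriv_eq_of_affine_on hf hab heq (right_mem_Icc.mpr hab.le)]
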